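/- If X is distributed according to the symmetric Dirichlet distribution with concentration parameter n on the m-simplex, then for each coordinate j, E[−X_j ln X_j] = (1/m)(H_{mn} − H_n). -/

import Mathlib

open MeasureTheory Real

/-- The standard probability simplex in `ℝ^m`, parametrized by its first `m-1`
coordinates: the last coordinate is `1 - ∑ y j`. -/
def simplexParam (m : ℕ) : Set (Fin (m - 1) → ℝ) :=
  {y | (∀ j, 0 ≤ y j) ∧ ∑ j, y j ≤ 1}

/-- The density of the symmetric Dirichlet distribution with parameter `n`
on the `m`-simplex, in the first `m-1` coordinates. -/
noncomputable def dirichletDensity (m n : ℕ) (y : Fin (m - 1) → ℝ) : ℝ :=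
  (Real.Gamma (m * n) / Real.Gamma n ^ m) *
    ((∏ j, (y j) ^ (n - 1)) * (1 - ∑ j, y j) ^ (n - 1))

/-- The `j`-th coordinate of the full probability vector determined by its
first `m-1` coordinates `y`. -/
noncomputable def simplexCoord (m : ℕ) (j : Fin m) (y : Fin (m - 1) → ℝ) : ℝ :=
  if h : (j : ℕ) < m - 1 then y ⟨j, h⟩ else 1 - ∑ i, y i

section Aux
open intervalIntegral


noncomputable def hR (n : ℕ) : ℝ := ((harmonic n : ℚ) : ℝ)

lemma hR_succ (n : ℕ) : hR (n + 1) = hR n + 1 / ((n : ℝ) + 1) := by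
  rw [hR, harmonic_succ]; push_cast [hR]; ring

lemma continuous_pow_mul_log (p : ℕ) : Continuous fun x : ℝ => x ^ (p + 1) * Real.log x := by
  have : (fun x : ℝ => x ^ (p + 1) * Real.log x)
      = fun x : ℝ => x ^ p * (x * Real.log x) := by
    funext x; rw [pow_succ]; ring
  rw [this]
  exact (continuous_pow p).mul Real.continuous_mul_log

lemma ii_pp (p' q' : ℕ) : IntervalIntegrable (fun x : ℝ => x ^ p' * (1 - x) ^ q')
    volume 0 1 :=
  (Continuous.mul (by continuity) (by continuity)).intervalIntegrable _ _

lemma integral_pow_mul_pow (q p : ℕ) :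
    ∫ x in (0:ℝ)..1, x ^ p * (1 - x) ^ q
      = (p.factorial * q.factorial : ℝ) / (p + q + 1).factorial := by
  induction q generalizing p with
  | zero =>
    simp only [pow_zero, mul_one, integral_pow, one_pow, Nat.factorial_zero,
      Nat.add_zero, Nat.factorial_succ]
    push_cast
    rw [zero_pow (by omega : p + 1 ≠ 0)]
    have h1 : (p:ℝ) + 1 ≠ 0 := by positivity
    have h2 : ((p.factorial : ℝ)) ≠ 0 := by positivity
    field_simp
    norm_num
  | succ q ih =>
    have h1 : ∀ x : ℝ, x ^ p * (1 - x) ^ (q + 1)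
        = x ^ p * (1 - x) ^ q - x ^ (p + 1) * (1 - x) ^ q := by
      intro x; ring
    rw [show (fun x : ℝ => x ^ p * (1 - x) ^ (q + 1)) = fun x : ℝ =>
        x ^ p * (1 - x) ^ q - x ^ (p + 1) * (1 - x) ^ q from funext h1,
      intervalIntegral.integral_sub (ii_pp p q) (ii_pp (p+1) q), ih p, ih (p+1)]
    have e1 : p + (q + 1) + 1 = (p + q + 1) + 1 := by omega
    have e2 : (p + 1) + q + 1 = (p + q + 1) + 1 := by omega
    rw [e1, e2, Nat.factorial_succ (p+q+1), Nat.factorial_succ q, Nat.factorial_succ p]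
    have h2 : ((p+q+1).factorial : ℝ) ≠ 0 := by positivity
    have h3 : ((p:ℝ)+q+1) + 1 ≠ 0 := by positivity
    push_cast
    field_simp
    ring


lemma integral_pow_neg_log (p : ℕ) (hp : 1 ≤ p) :
    ∫ x in (0:ℝ)..1, x ^ p * (-Real.log x) = 1 / ((p : ℝ) + 1) ^ 2 := by
  obtain ⟨p', rfl⟩ : ∃ p', p = p' + 1 := ⟨p - 1, by omega⟩
  set p := p' + 1
  have hcF : Continuous fun x : ℝ =>
      x ^ (p + 1) * (1 / ((p:ℝ) + 1) ^ 2) - x ^ (p + 1) * Real.log x * (1 / ((p:ℝ) + 1)) := by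
    have := continuous_pow_mul_log p
    continuity
  have hci : Continuous fun x : ℝ => x ^ p * (-Real.log x) := by
    have h := (continuous_pow_mul_log p').neg
    have : (fun x : ℝ => x ^ p * (-Real.log x)) = fun x : ℝ => -(x ^ p * Real.log x) := by
      funext x; ring
    rw [this]
    exact h
  have hp1 : ((p:ℝ) + 1) ≠ 0 := by positivity
  have := intervalIntegral.integral_eq_sub_of_hasDeriv_right_of_le (f := fun x : ℝ =>
      x ^ (p + 1) * (1 / ((p:ℝ) + 1) ^ 2) - x ^ (p + 1) * Real.log x * (1 / ((p:ℝ) + 1)))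
      (f' := fun x : ℝ => x ^ p * (-Real.log x)) zero_le_one
      hcF.continuousOn ?_ (hci.intervalIntegrable _ _)
  · rw [this]; simp
  · intro x hx
    have hx0 : x ≠ 0 := ne_of_gt hx.1
    have h1 : HasDerivAt (fun x : ℝ => x ^ (p + 1)) (((p:ℝ) + 1) * x ^ p) x := by
      have := hasDerivAt_pow (p + 1) x
      simpa using this
    have h2 : HasDerivAt Real.log x⁻¹ x := Real.hasDerivAt_log hx0
    have h3 := ((h1.mul_const (1 / ((p:ℝ) + 1) ^ 2)).sub ((h1.mul h2).mul_const
      (1 / ((p:ℝ) + 1))))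
    have heq : ((p:ℝ) + 1) * x ^ p * (1 / ((p:ℝ) + 1) ^ 2)
        - (((p:ℝ) + 1) * x ^ p * Real.log x + x ^ (p + 1) * x⁻¹) * (1 / ((p:ℝ) + 1))
        = x ^ p * (-Real.log x) := by
      rw [pow_succ]
      field_simp
      ring
    rw [heq] at h3
    exact h3.hasDerivWithinAt
-- scaled beta
lemma integral_pow_mul_pow_scaled (p q : ℕ) {s : ℝ} (hs : 0 ≤ s) :
    ∫ u in (0:ℝ)..s, u ^ p * (s - u) ^ q
      = (p.factorial * q.factorial : ℝ) / (p + q + 1).factorial * s ^ (p + q + 1) := by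
  rcases eq_or_lt_of_le hs with h | h
  · rw [← h]; simp [zero_pow (by omega : p + q + 1 ≠ 0)]
  · have key := intervalIntegral.smul_integral_comp_mul_left
      (fun u : ℝ => u ^ p * (s - u) ^ q) s (a := 0) (b := 1)
    simp only [mul_zero, mul_one, smul_eq_mul] at key
    rw [← key]
    have : ∀ x : ℝ, (s * x) ^ p * (s - s * x) ^ q
        = s ^ (p + q) * (x ^ p * (1 - x) ^ q) := by
      intro x
      have : s - s * x = s * (1 - x) := by ring
      rw [this, mul_pow, mul_pow]; ring
    rw [intervalIntegral.integral_congr (fun x _ => this x),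
      intervalIntegral.integral_const_mul, integral_pow_mul_pow]
    rw [pow_succ]
    ring
-- L lemma
lemma continuous_ppl (p q : ℕ) (hp : 1 ≤ p) :
    Continuous fun x : ℝ => x ^ p * (1 - x) ^ q * (-Real.log x) := by
  obtain ⟨p', rfl⟩ : ∃ p', p = p' + 1 := ⟨p - 1, by omega⟩
  have : (fun x : ℝ => x ^ (p' + 1) * (1 - x) ^ q * (-Real.log x))
      = fun x : ℝ => -((1 - x) ^ q * (x ^ (p' + 1) * Real.log x)) := by
    funext x; ring
  rw [this]
  exact (((continuous_const.sub continuous_id).pow q).mul (continuous_pow_mul_log p')).neg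

lemma ii_ppl (p q : ℕ) (hp : 1 ≤ p) :
    IntervalIntegrable (fun x : ℝ => x ^ p * (1 - x) ^ q * (-Real.log x)) volume 0 1 :=
  (continuous_ppl p q hp).intervalIntegrable _ _

lemma integral_pow_pow_neg_log (q p : ℕ) (hp : 1 ≤ p) :
    ∫ x in (0:ℝ)..1, x ^ p * (1 - x) ^ q * (-Real.log x)
      = (p.factorial * q.factorial : ℝ) / (p + q + 1).factorial
          * (hR (p + q + 1) - hR p) := by
  induction q generalizing p with
  | zero =>
    simp only [pow_zero, mul_one, Nat.factorial_zero, Nat.add_zero]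
    rw [integral_pow_neg_log p hp, show p + 0 + 1 = p + 1 from rfl, hR_succ,
      Nat.factorial_succ]
    have h1 : (p:ℝ) + 1 ≠ 0 := by positivity
    have h2 : ((p.factorial : ℝ)) ≠ 0 := by positivity
    push_cast
    field_simp
    ring
  | succ q ih =>
    have h1 : ∀ x : ℝ, x ^ p * (1 - x) ^ (q + 1) * (-Real.log x)
        = x ^ p * (1 - x) ^ q * (-Real.log x)
          - x ^ (p + 1) * (1 - x) ^ q * (-Real.log x) := by
      intro x; ring
    rw [show (fun x : ℝ => x ^ p * (1 - x) ^ (q + 1) * (-Real.log x)) = fun x : ℝ =>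
        x ^ p * (1 - x) ^ q * (-Real.log x) - x ^ (p + 1) * (1 - x) ^ q * (-Real.log x)
        from funext h1,
      intervalIntegral.integral_sub (ii_ppl p q hp) (ii_ppl (p+1) q (by omega)),
      ih p hp, ih (p+1) (by omega)]
    have e1 : p + (q + 1) + 1 = (p + q + 1) + 1 := by omega
    have e2 : (p + 1) + q + 1 = (p + q + 1) + 1 := by omega
    rw [e1, e2, hR_succ (p + q + 1), hR_succ p, Nat.factorial_succ (p+q+1),
      Nat.factorial_succ q, Nat.factorial_succ p]
    have h2 : ((p+q+1).factorial : ℝ) ≠ 0 := by positivity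
    have h3 : ((p:ℝ)+q+1) + 1 ≠ 0 := by positivity
    have h4 : (p:ℝ) + 1 ≠ 0 := by positivity
    have h5 : ((p.factorial : ℝ)) ≠ 0 := by positivity
    have h6 : ((q.factorial : ℝ)) ≠ 0 := by positivity
    push_cast
    field_simp
    ring
-- S lemmas
def S (k : ℕ) (r : ℝ) : Set (Fin k → ℝ) := {y | (∀ i, 0 ≤ y i) ∧ ∑ i, y i ≤ r}

lemma isClosed_S (k : ℕ) (r : ℝ) : IsClosed (S k r) := by
  have h1 : IsClosed {y : Fin k → ℝ | ∀ i, 0 ≤ y i} := by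
    have : {y : Fin k → ℝ | ∀ i, 0 ≤ y i} = ⋂ i, {y | 0 ≤ y i} := by
      ext y; simp [Set.mem_iInter]
    rw [this]
    exact isClosed_iInter fun i => isClosed_le continuous_const (continuous_apply i)
  have h2 : IsClosed {y : Fin k → ℝ | ∑ i, y i ≤ r} :=
    isClosed_le (continuous_finset_sum _ fun i _ => continuous_apply i) continuous_const
  exact (h1.inter h2 : _)

lemma measurableSet_S (k : ℕ) (r : ℝ) : MeasurableSet (S k r) :=
  (isClosed_S k r).measurableSet

lemma isCompact_S (k : ℕ) (r : ℝ) : IsCompact (S k r) := by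
  refine IsCompact.of_isClosed_subset (isCompact_Icc (a := (0 : Fin k → ℝ))
    (b := fun _ => max r 0)) (isClosed_S k r) ?_
  rintro y ⟨h1, h2⟩
  constructor
  · intro i; exact h1 i
  · intro i
    calc y i ≤ ∑ j, y j := Finset.single_le_sum (fun j _ => h1 j) (Finset.mem_univ i)
    _ ≤ r := h2
    _ ≤ max r 0 := le_max_left _ _

lemma S_empty {k : ℕ} {r : ℝ} (hr : r < 0) : S k r = ∅ := by
  ext y
  simp only [S, Set.mem_setOf_eq, Set.mem_empty_iff_false, iff_false, not_and]
  intro h1 h2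
  exact absurd (le_trans (Finset.sum_nonneg fun i _ => h1 i) h2) (not_le.2 hr)

lemma integrableOn_S {k : ℕ} {r : ℝ} {f : (Fin k → ℝ) → ℝ} (hf : Continuous f) :
    IntegrableOn f (S k r) := hf.continuousOn.integrableOn_compact (isCompact_S k r)
-- base case
lemma base_case (a : ℕ) (g : ℝ → ℝ) (r : ℝ) (hr : 0 ≤ r) :
    ∫ y in S 1 r, (∏ i, y i ^ (a - 1)) * g (r - ∑ i, y i)
      = ∫ t in (0:ℝ)..r, (r - t) ^ (a - 1) * g t := by
  have e := MeasurableEquiv.funUnique (Fin 1) ℝ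
  have hmp := (volume_preserving_funUnique (Fin 1) ℝ).symm
  have hpre : (MeasurableEquiv.funUnique (Fin 1) ℝ).symm ⁻¹' (S 1 r) = Set.Icc 0 r := by
    ext x
    simp [S, MeasurableEquiv.funUnique, Set.mem_Icc, Fin.sum_univ_one, Fin.forall_fin_one]
  have := hmp.setIntegral_preimage_emb
    (MeasurableEquiv.funUnique (Fin 1) ℝ).symm.measurableEmbedding
    (fun y => (∏ i, y i ^ (a - 1)) * g (r - ∑ i, y i)) (S 1 r)
  refine this.symm.trans ?_
  rw [hpre]
  have heq : ∀ x : ℝ, (∏ i : Fin 1, ((MeasurableEquiv.funUnique (Fin 1) ℝ).symm x) i ^ (a-1))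
      * g (r - ∑ i : Fin 1, ((MeasurableEquiv.funUnique (Fin 1) ℝ).symm x) i)
      = x ^ (a-1) * g (r - x) := by
    intro x
    simp [MeasurableEquiv.funUnique, Fin.sum_univ_one]
  rw [MeasureTheory.setIntegral_congr_fun (measurableSet_Icc) (fun x _ => heq x)]
  rw [MeasureTheory.integral_Icc_eq_integral_Ioc, ← intervalIntegral.integral_of_le hr]
  have : ∀ x : ℝ, x ^ (a-1) * g (r - x)
      = (fun t => (r - t)^(a-1) * g t) (r - x) := by
    intro x; simp [sub_sub_cancel]
  rw [intervalIntegral.integral_congr (fun x _ => this x),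
    intervalIntegral.integral_comp_sub_left (fun t => (r - t)^(a-1) * g t) r]
  simp
-- triangle swap
lemma indicator_Ioc_integral {r : ℝ} (hr : 0 ≤ r) (φ : ℝ → ℝ) :
    ∫ u, Set.indicator (Set.Ioc 0 r) φ u = ∫ u in (0:ℝ)..r, φ u := by
  rw [MeasureTheory.integral_indicator measurableSet_Ioc, intervalIntegral.integral_of_le hr]

lemma triangle_swap (F : ℝ → ℝ → ℝ) (hF : Continuous (Function.uncurry F))
    {r : ℝ} (hr : 0 ≤ r) :
    ∫ u in (0:ℝ)..r, ∫ t in (0:ℝ)..(r - u), F u t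
      = ∫ t in (0:ℝ)..r, ∫ u in (0:ℝ)..(r - t), F u t := by
  set T : Set (ℝ × ℝ) := {p | 0 < p.1 ∧ 0 < p.2 ∧ p.1 + p.2 ≤ r} with hT
  have hTm : MeasurableSet T := by
    apply MeasurableSet.inter
    · exact measurableSet_lt measurable_const measurable_fst
    apply MeasurableSet.inter
    · exact measurableSet_lt measurable_const measurable_snd
    · exact measurableSet_le (measurable_fst.add measurable_snd) measurable_const
  set G : ℝ × ℝ → ℝ := T.indicator (Function.uncurry F) with hG
  have hsub : T ⊆ Set.Icc (0, 0) (r, r) := by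
    rintro ⟨u, t⟩ ⟨h1, h2, h3⟩
    refine ⟨⟨le_of_lt h1, le_of_lt h2⟩, ⟨?_, ?_⟩⟩
    · linarith
    · linarith
  have hInt : Integrable G := by
    rw [hG, integrable_indicator_iff hTm]
    exact (hF.continuousOn.integrableOn_compact isCompact_Icc).mono_set hsub
  have inner1 : ∀ u : ℝ, (∫ t, G (u, t))
      = Set.indicator (Set.Ioc 0 r) (fun u => ∫ t in (0:ℝ)..(r - u), F u t) u := by
    intro u
    by_cases hu : u ∈ Set.Ioc (0:ℝ) r
    · rw [Set.indicator_of_mem hu]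
      have : ∀ t : ℝ, G (u, t) = Set.indicator (Set.Ioc 0 (r - u)) (F u) t := by
        intro t
        by_cases ht : t ∈ Set.Ioc (0:ℝ) (r - u)
        · rw [Set.indicator_of_mem ht, hG,
            Set.indicator_of_mem (by exact ⟨hu.1, ht.1, by linarith [ht.2]⟩)]
          rfl
        · rw [Set.indicator_of_notMem ht, hG, Set.indicator_of_notMem]
          rintro ⟨h1, h2, h3⟩
          exact ht ⟨h2, by linarith⟩
      simp_rw [this]
      rw [MeasureTheory.integral_indicator measurableSet_Ioc,
        intervalIntegral.integral_of_le (by linarith [hu.2])]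
    · rw [Set.indicator_of_notMem hu]
      have : ∀ t : ℝ, G (u, t) = 0 := by
        intro t
        rw [hG, Set.indicator_of_notMem]
        rintro ⟨h1, h2, h3⟩
        exact hu ⟨h1, by linarith⟩
      simp_rw [this, MeasureTheory.integral_zero]
  have inner2 : ∀ t : ℝ, (∫ u, G (u, t))
      = Set.indicator (Set.Ioc 0 r) (fun t => ∫ u in (0:ℝ)..(r - t), F u t) t := by
    intro t
    by_cases ht : t ∈ Set.Ioc (0:ℝ) r
    · rw [Set.indicator_of_mem ht]
      have : ∀ u : ℝ, G (u, t) = Set.indicator (Set.Ioc 0 (r - t)) (fun u => F u t) u := by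
        intro u
        by_cases hu : u ∈ Set.Ioc (0:ℝ) (r - t)
        · rw [Set.indicator_of_mem hu, hG,
            Set.indicator_of_mem (by exact ⟨hu.1, ht.1, by linarith [hu.2]⟩)]
          rfl
        · rw [Set.indicator_of_notMem hu, hG, Set.indicator_of_notMem]
          rintro ⟨h1, h2, h3⟩
          exact hu ⟨h1, by linarith⟩
      simp_rw [this]
      rw [MeasureTheory.integral_indicator measurableSet_Ioc,
        intervalIntegral.integral_of_le (by linarith [ht.2])]
    · rw [Set.indicator_of_notMem ht]
      have : ∀ u : ℝ, G (u, t) = 0 := by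
        intro u
        rw [hG, Set.indicator_of_notMem]
        rintro ⟨h1, h2, h3⟩
        exact ht ⟨h2, by linarith⟩
      simp_rw [this, MeasureTheory.integral_zero]
  have swap := MeasureTheory.integral_integral_swap (f := fun u t => G (u, t))
    (by rwa [show Function.uncurry (fun u t => G (u, t)) = G from rfl, ← Measure.volume_eq_prod] )
  calc ∫ u in (0:ℝ)..r, ∫ t in (0:ℝ)..(r - u), F u t
      = ∫ u, Set.indicator (Set.Ioc 0 r) (fun u => ∫ t in (0:ℝ)..(r - u), F u t) u :=
        (indicator_Ioc_integral hr _).symm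
    _ = ∫ u, ∫ t, G (u, t) := by simp_rw [inner1]
    _ = ∫ t, ∫ u, G (u, t) := swap
    _ = ∫ t, Set.indicator (Set.Ioc 0 r) (fun t => ∫ u in (0:ℝ)..(r - t), F u t) t := by
        simp_rw [inner2]
    _ = ∫ t in (0:ℝ)..r, ∫ u in (0:ℝ)..(r - t), F u t := indicator_Ioc_integral hr _
-- master
noncomputable def Ck (a k : ℕ) : ℝ := ((a-1).factorial : ℝ)^k / ((k*a-1).factorial : ℝ)

lemma master (a : ℕ) (ha : 1 ≤ a) (g : ℝ → ℝ) (hg : Continuous g) :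
    ∀ k, 1 ≤ k → ∀ r : ℝ, 0 ≤ r →
    (∫ y in S k r, (∏ i, y i ^ (a-1)) * g (r - ∑ i, y i))
      = Ck a k * ∫ t in (0:ℝ)..r, (r - t) ^ (k*a-1) * g t := by
  intro k hk
  induction k, hk using Nat.le_induction with
  | base =>
    intro r hr
    rw [base_case a g r hr, Ck]
    rw [one_mul, pow_one, div_self (by positivity), one_mul]
  | succ k hk ih =>
    intro r hr
    set F : (Fin (k+1) → ℝ) → ℝ := fun y => (∏ i, y i ^ (a-1)) * g (r - ∑ i, y i) with hF
    have hFc : Continuous F := by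
      apply Continuous.mul
      · exact continuous_finset_prod _ fun i _ => (continuous_apply i).pow _
      · exact hg.comp (continuous_const.sub (continuous_finset_sum _ fun i _ =>
          continuous_apply i))
    set G : (Fin (k+1) → ℝ) → ℝ := (S (k+1) r).indicator F with hG
    have hmp := (volume_preserving_piFinSuccAbove (fun _ : Fin (k+1) => ℝ) 0).symm _
    set e := (MeasurableEquiv.piFinSuccAbove (fun _ : Fin (k+1) => ℝ) 0).symm with he
    have hGint : Integrable G := by
      rw [hG, integrable_indicator_iff (measurableSet_S _ _)]
      exact integrableOn_S hFc
    have hGe : Integrable (fun z => G (e z)) := by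
      have := (hmp.integrable_comp_emb (MeasurableEquiv.measurableEmbedding _)).2 hGint
      exact this
    have step2 : ∫ y in S (k+1) r, F y = ∫ z : ℝ × (Fin k → ℝ), G (e z) := by
      rw [← MeasureTheory.integral_indicator (measurableSet_S _ _), ← hG,
        hmp.integral_comp' G]
    have hins : ∀ (u : ℝ) (y : Fin k → ℝ), e (u, y) = Fin.insertNth 0 u y := by
      intro u y
      simp [he, MeasurableEquiv.piFinSuccAbove_symm_apply, Fin.insertNthEquiv]
    have hsum : ∀ (u : ℝ) (y : Fin k → ℝ),
        ∑ i, Fin.insertNth (α := fun _ => ℝ) 0 u y i = u + ∑ i, y i := by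
      intro u y
      rw [Fin.sum_univ_succAbove _ 0]
      simp
    have hprod : ∀ (u : ℝ) (y : Fin k → ℝ),
        ∏ i, (Fin.insertNth (α := fun _ => ℝ) 0 u y i) ^ (a-1)
          = u ^ (a-1) * ∏ i, (y i) ^ (a-1) := by
      intro u y
      rw [Fin.prod_univ_succAbove _ 0]
      simp
    have hmem : ∀ (u : ℝ) (y : Fin k → ℝ),
        Fin.insertNth (α := fun _ => ℝ) 0 u y ∈ S (k+1) r
          ↔ (0 ≤ u ∧ y ∈ S k (r - u)) := by
      intro u y
      constructor
      · rintro ⟨h1, h2⟩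
        rw [Fin.forall_iff_succAbove (0 : Fin (k+1))] at h1
        simp only [Fin.insertNth_apply_same, Fin.insertNth_apply_succAbove] at h1
        rw [hsum] at h2
        exact ⟨h1.1, h1.2, by linarith⟩
      · rintro ⟨hu, h1, h2⟩
        constructor
        · rw [Fin.forall_iff_succAbove (0 : Fin (k+1))]
          simp only [Fin.insertNth_apply_same, Fin.insertNth_apply_succAbove]
          exact ⟨hu, h1⟩
        · rw [hsum]; linarith
    set φ : ℝ → ℝ := fun u => u^(a-1) *
        (Ck a k * ∫ t in (0:ℝ)..(r-u), ((r-u) - t)^(k*a-1) * g t) with hφ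
    have inner : ∀ u : ℝ, (∫ y : Fin k → ℝ, G (e (u, y)))
        = Set.indicator (Set.Icc 0 r) φ u := by
      intro u
      by_cases hu : 0 ≤ u
      · have hptw : ∀ y : Fin k → ℝ, G (e (u, y))
            = Set.indicator (S k (r - u))
                (fun y => u^(a-1) * ((∏ i, y i ^ (a-1)) * g ((r-u) - ∑ i, y i))) y := by
          intro y
          rw [hins]
          by_cases hy : y ∈ S k (r - u)
          · rw [Set.indicator_of_mem hy, hG,
              Set.indicator_of_mem ((hmem u y).2 ⟨hu, hy⟩)]
            simp only [hF, hprod u y, hsum u y, sub_add_eq_sub_sub]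
            ring
          · rw [Set.indicator_of_notMem hy, hG, Set.indicator_of_notMem]
            intro hmem'
            exact hy ((hmem u y).1 hmem').2
        simp_rw [hptw]
        rw [MeasureTheory.integral_indicator (measurableSet_S _ _),
          MeasureTheory.integral_const_mul]
        by_cases hur : u ≤ r
        · rw [ih (r - u) (by linarith), Set.indicator_of_mem (Set.mem_Icc.2 ⟨hu, hur⟩)]
        · rw [S_empty (by linarith : r - u < 0), Measure.restrict_empty,
            MeasureTheory.integral_zero_measure, mul_zero,
            Set.indicator_of_notMem (by simp [Set.mem_Icc]; intro; linarith)]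
      · have hptw : ∀ y : Fin k → ℝ, G (e (u, y)) = 0 := by
          intro y
          rw [hins, hG, Set.indicator_of_notMem]
          intro hmem'
          exact hu ((hmem u y).1 hmem').1
        simp_rw [hptw, MeasureTheory.integral_zero]
        rw [Set.indicator_of_notMem (by simp [Set.mem_Icc]; intro h; linarith)]
    rw [step2, Measure.volume_eq_prod, MeasureTheory.integral_prod _
      (by rw [← Measure.volume_eq_prod]; exact hGe)]
    simp_rw [inner]
    rw [MeasureTheory.integral_indicator measurableSet_Icc,
      MeasureTheory.integral_Icc_eq_integral_Ioc, ← intervalIntegral.integral_of_le hr]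
    -- now: ∫ u in 0..r, φ u = RHS
    set F' : ℝ → ℝ → ℝ := fun u t => u^(a-1) * (((r - u) - t)^(k*a-1) * g t) with hF'
    have hφ2 : ∀ u ∈ Set.uIcc (0:ℝ) r, φ u
        = Ck a k * ∫ t in (0:ℝ)..(r-u), F' u t := by
      intro u _
      rw [hφ]
      simp only [hF']
      rw [intervalIntegral.integral_const_mul]
      ring
    rw [intervalIntegral.integral_congr hφ2, intervalIntegral.integral_const_mul]
    have hF'c : Continuous (Function.uncurry F') := by
      apply Continuous.mul
      · exact (continuous_fst.pow _)
      · exact (((continuous_const.sub continuous_fst).sub continuous_snd).pow _).mul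
          (hg.comp continuous_snd)
    rw [triangle_swap F' hF'c hr]
    set A : ℕ := (a-1) + (k*a-1) + 1 with hA
    have hinner2 : ∀ t ∈ Set.uIcc (0:ℝ) r,
        (∫ u in (0:ℝ)..(r-t), F' u t)
          = ((a-1).factorial * (k*a-1).factorial : ℝ) / A.factorial
              * ((r-t)^A * g t) := by
      intro t ht
      rw [Set.uIcc_of_le hr] at ht
      have h0rt : 0 ≤ r - t := by linarith [ht.2]
      have : ∀ u, u ∈ Set.uIcc (0:ℝ) (r-t) → F' u t
          = (fun u => (u^(a-1) * ((r-t) - u)^(k*a-1)) * g t) u := by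
        intro u _
        simp only [hF']
        ring
      rw [intervalIntegral.integral_congr this, intervalIntegral.integral_mul_const,
        integral_pow_mul_pow_scaled _ _ h0rt]
      ring
    rw [intervalIntegral.integral_congr hinner2]
    have hexp : A = (k+1)*a - 1 := by
      rw [hA]
      have h1 : 1 ≤ k*a := Nat.one_le_iff_ne_zero.2 (by positivity)
      cases' Nat.exists_eq_add_of_le ha with c hc
      cases' Nat.exists_eq_add_of_le hk with d hd
      subst hc hd
      ring_nf
      omega
    have hconst : Ck a k * (((a-1).factorial * (k*a-1).factorial : ℝ) / A.factorial)
        = Ck a (k+1) := by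
      rw [Ck, Ck, hexp]
      have h2 : ((k*a-1).factorial : ℝ) ≠ 0 := by positivity
      have h3 : (((k+1)*a-1).factorial : ℝ) ≠ 0 := by positivity
      field_simp
      ring
    rw [hexp] at hconst
    rw [intervalIntegral.integral_const_mul, hexp, ← mul_assoc, hconst]
-- swap coord
section swap
variable {k : ℕ} (j0 : Fin k)

noncomputable def σL : (Fin k → ℝ) →ₗ[ℝ] (Fin k → ℝ) where
  toFun := fun y i => if i = j0 then -∑ l, y l else y i
  map_add' := by
    intro y z; funext i
    by_cases h : i = j0 <;> simp [h, Finset.sum_add_distrib]; ring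
  map_smul' := by
    intro c y; funext i
    by_cases h : i = j0 <;> simp [h, Finset.mul_sum]

noncomputable def σT (y : Fin k → ℝ) : Fin k → ℝ := fun i => if i = j0 then 1 - ∑ l, y l else y i

lemma σT_apply_same (y : Fin k → ℝ) : σT j0 y j0 = 1 - ∑ l, y l := by simp [σT]

lemma σT_apply_ne {i : Fin k} (h : i ≠ j0) (y : Fin k → ℝ) : σT j0 y i = y i := by
  simp [σT, h]

lemma σT_eq (y : Fin k → ℝ) : σT j0 y = σL j0 y + fun i => if i = j0 then (1:ℝ) else 0 := by
  funext i
  by_cases h : i = j0 <;> simp [σT, σL, h] <;> ring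

lemma sum_σL (y : Fin k → ℝ) : ∑ i, σL j0 y i = -y j0 := by
  classical
  rw [← Finset.sum_erase_add _ _ (Finset.mem_univ j0)]
  have h1 : ∀ i ∈ Finset.univ.erase j0, σL j0 y i = y i := by
    intro i hi
    simp [σL, (Finset.mem_erase.1 hi).1]
  rw [Finset.sum_congr rfl h1]
  have h2 : σL j0 y j0 = -∑ l, y l := by simp [σL]
  rw [h2, ← Finset.sum_erase_add _ y (Finset.mem_univ j0)]
  ring

lemma sum_σT (y : Fin k → ℝ) : ∑ l, σT j0 y l = 1 - y j0 := by
  rw [← Finset.sum_erase_add _ _ (Finset.mem_univ j0)]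
  have hc : ∀ i ∈ Finset.univ.erase j0, σT j0 y i = y i := by
    intro i hi; exact σT_apply_ne j0 (Finset.mem_erase.1 hi).1 y
  rw [Finset.sum_congr rfl hc, σT_apply_same,
    ← Finset.sum_erase_add _ y (Finset.mem_univ j0)]
  ring

lemma σL_invol : (σL j0).comp (σL j0) = LinearMap.id := by
  apply LinearMap.ext
  intro y
  funext i
  by_cases h : i = j0
  · rw [h]
    simp only [LinearMap.comp_apply, LinearMap.id_apply]
    have h2 : (σL j0) ((σL j0) y) j0 = -∑ l, σL j0 y l := by simp [σL]
    rw [h2, sum_σL]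
    ring
  · simp [σL, h]

lemma σL_det : |LinearMap.det (σL j0)| = 1 := by
  have h := LinearMap.det_comp (σL j0) (σL j0)
  rw [σL_invol, LinearMap.det_id] at h
  rcases mul_self_eq_one_iff.1 h.symm with h1 | h1 <;> rw [h1] <;> norm_num

lemma σT_measurePreserving : MeasurePreserving (σT j0) volume volume := by
  have hdet : LinearMap.det (σL j0) ≠ 0 := by
    intro h
    have := σL_det j0
    rw [h, abs_zero] at this
    norm_num at this
  have hmap : Measure.map (σL j0) volume = volume := by
    rw [Real.map_linearMap_volume_pi_eq_smul_volume_pi hdet, abs_inv, σL_det]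
    norm_num
  have hL : MeasurePreserving (σL j0) volume volume :=
    ⟨(σL j0).continuous_of_finiteDimensional.measurable, hmap⟩
  have hT := measurePreserving_add_right (volume : Measure (Fin k → ℝ))
    (fun i => if i = j0 then (1:ℝ) else 0)
  have heq : σT j0 = (· + fun i => if i = j0 then (1:ℝ) else 0) ∘ (σL j0) := by
    funext y; exact σT_eq j0 y
  rw [heq]
  exact hT.comp hL

lemma σT_invol (y : Fin k → ℝ) : σT j0 (σT j0 y) = y := by
  funext i
  by_cases h : i = j0
  · rw [h, σT_apply_same, sum_σT]
    ring
  · rw [σT_apply_ne j0 h, σT_apply_ne j0 h]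

lemma σT_continuous : Continuous (σT j0) := by
  apply continuous_pi
  intro i
  by_cases h : i = j0
  · simp only [σT, if_pos h]
    exact continuous_const.sub (continuous_finset_sum _ fun l _ => continuous_apply l)
  · simp only [σT, if_neg h]
    exact continuous_apply i

noncomputable def σH : Homeomorph (Fin k → ℝ) (Fin k → ℝ) where
  toFun := σT j0
  invFun := σT j0
  left_inv := σT_invol j0
  right_inv := σT_invol j0
  continuous_toFun := σT_continuous j0
  continuous_invFun := σT_continuous j0

lemma σT_mem_S {y : Fin k → ℝ} (hy : y ∈ S k 1) : σT j0 y ∈ S k 1 := by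
  obtain ⟨h1, h2⟩ := hy
  constructor
  · intro i
    by_cases h : i = j0
    · rw [h, σT_apply_same]; linarith
    · rw [σT_apply_ne j0 h]; exact h1 i
  · rw [sum_σT]
    have := h1 j0
    linarith

lemma σT_preimage_S : σT j0 ⁻¹' (S k 1) = S k 1 := by
  ext y
  constructor
  · intro hy
    have := σT_mem_S j0 hy
    rwa [σT_invol] at this
  · exact fun hy => σT_mem_S j0 hy

lemma density_swap (n : ℕ) (y : Fin k → ℝ) :
    ((∏ i, (σT j0 y) i ^ (n-1)) * (1 - ∑ i, (σT j0 y) i)^(n-1))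
      = ((∏ i, y i ^ (n-1)) * (1 - ∑ i, y i)^(n-1)) := by
  have hprod : ∏ i, (σT j0 y) i ^ (n-1)
      = (1 - ∑ l, y l)^(n-1) * ∏ i ∈ Finset.univ.erase j0, y i ^ (n-1) := by
    rw [← Finset.prod_erase_mul _ _ (Finset.mem_univ j0)]
    have hc : ∀ i ∈ Finset.univ.erase j0, (σT j0 y) i ^ (n-1) = y i ^ (n-1) := by
      intro i hi; rw [σT_apply_ne j0 (Finset.mem_erase.1 hi).1]
    rw [Finset.prod_congr rfl hc, σT_apply_same]
    ring
  rw [hprod, sum_σT]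
  have h3 : (1 : ℝ) - (1 - y j0) = y j0 := by ring
  rw [h3, ← Finset.prod_erase_mul _ _ (Finset.mem_univ j0)]
  ring

lemma swap_coord (n : ℕ) (f : ℝ → ℝ) :
    ∫ y in S k 1, ((∏ i, y i ^ (n-1)) * (1 - ∑ i, y i)^(n-1)) * f (y j0)
      = ∫ y in S k 1, ((∏ i, y i ^ (n-1)) * (1 - ∑ i, y i)^(n-1)) * f (1 - ∑ i, y i) := by
  have hemb : MeasurableEmbedding (σT j0) := (σH j0).measurableEmbedding
  have h := (σT_measurePreserving j0).setIntegral_preimage_emb hemb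
    (fun y => ((∏ i, y i ^ (n-1)) * (1 - ∑ i, y i)^(n-1)) * f (y j0)) (S k 1)
  rw [← h, σT_preimage_S]
  apply MeasureTheory.setIntegral_congr_fun (measurableSet_S k 1)
  intro y _
  simp only
  rw [density_swap j0 n y, σT_apply_same]

end swap
end Aux

theorem average_dirichlet_coord_entropy (m n : ℕ) (hm : 1 ≤ m) (hn : 1 ≤ n)
    (j : Fin m) :
    ∫ y in simplexParam m,
        dirichletDensity m n y *
          (-(simplexCoord m j y * Real.log (simplexCoord m j y))) =
      (1 / m : ℝ) * ((harmonic (m * n) : ℝ) - (harmonic n : ℝ)) := by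
  rcases eq_or_lt_of_le hm with hm1 | hm2
  · -- m = 1
    obtain rfl : m = 1 := hm1.symm
    have hcoord : ∀ y : Fin (1-1) → ℝ, simplexCoord 1 j y = 1 := by
      intro y
      rw [simplexCoord, dif_neg (by omega)]
      simp
    have h0 : ∀ y : Fin (1-1) → ℝ, dirichletDensity 1 n y *
        (-(simplexCoord 1 j y * Real.log (simplexCoord 1 j y))) = 0 := by
      intro y
      rw [hcoord y, Real.log_one, mul_zero, neg_zero, mul_zero]
    simp_rw [h0, MeasureTheory.integral_zero]
    norm_num
  · have hm2' : 2 ≤ m := hm2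
    have hk1 : 1 ≤ m - 1 := by omega
    have hkm : (m - 1) + 1 = m := by omega
    have hkn1 : 1 ≤ (m-1) * n := Nat.one_le_iff_ne_zero.2 (by positivity)
    have hmn1 : 1 ≤ m * n := Nat.one_le_iff_ne_zero.2 (by positivity)
    set g : ℝ → ℝ := fun t => t^(n-1) * -(t * Real.log t) with hgdef
    have hgc : Continuous g := (continuous_pow _).mul Real.continuous_mul_log.neg
    -- step A: pull out the constant
    have stepA : (∫ y in simplexParam m, dirichletDensity m n y *
          (-(simplexCoord m j y * Real.log (simplexCoord m j y))))
        = (Real.Gamma (m * n) / Real.Gamma n ^ m) *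
            ∫ y in S (m-1) 1, ((∏ i, y i ^ (n-1)) * (1 - ∑ i, y i)^(n-1)) *
              (fun t => -(t * Real.log t)) (simplexCoord m j y) := by
      rw [← MeasureTheory.integral_const_mul]
      apply MeasureTheory.setIntegral_congr_fun (measurableSet_S (m-1) 1)
      intro y _
      simp only [dirichletDensity]
      ring
    -- step B: reduce to the last coordinate
    have stepB : (∫ y in S (m-1) 1, ((∏ i, y i ^ (n-1)) * (1 - ∑ i, y i)^(n-1)) *
              (fun t => -(t * Real.log t)) (simplexCoord m j y))
        = ∫ y in S (m-1) 1, ((∏ i, y i ^ (n-1)) * (1 - ∑ i, y i)^(n-1)) *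
              (fun t => -(t * Real.log t)) (1 - ∑ i, y i) := by
      by_cases hj : (j : ℕ) < m - 1
      · have hco : ∀ y : Fin (m-1) → ℝ, simplexCoord m j y = y ⟨(j:ℕ), hj⟩ := by
          intro y; rw [simplexCoord, dif_pos hj]
        simp_rw [hco]
        exact swap_coord ⟨(j:ℕ), hj⟩ n (fun t => -(t * Real.log t))
      · have hco : ∀ y : Fin (m-1) → ℝ, simplexCoord m j y = 1 - ∑ i, y i := by
          intro y; rw [simplexCoord, dif_neg hj]
        simp_rw [hco]
    -- step C: rewrite to master form
    have stepC : (∫ y in S (m-1) 1, ((∏ i, y i ^ (n-1)) * (1 - ∑ i, y i)^(n-1)) *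
              (fun t => -(t * Real.log t)) (1 - ∑ i, y i))
        = ∫ y in S (m-1) 1, (∏ i, y i ^ (n-1)) * g (1 - ∑ i, y i) := by
      apply MeasureTheory.setIntegral_congr_fun (measurableSet_S (m-1) 1)
      intro y _
      simp only [hgdef]
      ring
    -- step D: master lemma
    have stepD := master n hn g hgc (m-1) hk1 1 zero_le_one
    -- step E/F: the 1-D integral
    have hq : n + ((m-1)*n - 1) + 1 = m * n := by
      have h1 : (m-1)*n + n = m * n := by
        have : (m-1) + 1 = m := hkm
        calc (m-1)*n + n = ((m-1)+1)*n := by ring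
        _ = m * n := by rw [hkm]
      omega
    have stepE : (∫ t in (0:ℝ)..1, (1 - t)^((m-1)*n - 1) * g t)
        = ∫ x in (0:ℝ)..1, x ^ n * (1 - x)^((m-1)*n - 1) * (-Real.log x) := by
      apply intervalIntegral.integral_congr
      intro t _
      simp only [hgdef]
      have hpow : t ^ n = t^(n-1) * t := by
        rw [← pow_succ]
        congr 1
        omega
      rw [hpow]
      ring
    have stepF : (∫ x in (0:ℝ)..1, x ^ n * (1 - x)^((m-1)*n - 1) * (-Real.log x))
        = ((n.factorial * ((m-1)*n - 1).factorial : ℝ) / (m*n).factorial)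
            * (hR (m*n) - hR n) := by
      rw [integral_pow_pow_neg_log ((m-1)*n - 1) n hn, hq]
    -- final arithmetic
    have hG1 : Real.Gamma ((m : ℝ) * n) = ((m*n - 1).factorial : ℝ) := by
      have h : ((m*n - 1 : ℕ) : ℝ) + 1 = (m : ℝ) * n := by
        rw [Nat.cast_sub hmn1]
        push_cast
        ring
      rw [← h, Real.Gamma_nat_eq_factorial]
    have hG2 : Real.Gamma ((n : ℝ)) = ((n - 1).factorial : ℝ) := by
      have h : ((n - 1 : ℕ) : ℝ) + 1 = (n : ℝ) := by
        rw [Nat.cast_sub hn]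
        push_cast
        ring
      rw [← h, Real.Gamma_nat_eq_factorial]
    rw [stepA, stepB, stepC, stepD, stepE, stepF, hG1, hG2]
    have hBm : ((n-1).factorial : ℝ)^m = ((n-1).factorial : ℝ)^(m-1) * (n-1).factorial := by
      rw [← pow_succ, hkm]
    have hnf : (n.factorial : ℝ) = n * (n-1).factorial := by
      exact_mod_cast (Nat.mul_factorial_pred (by omega)).symm
    have hMf : ((m*n).factorial : ℝ) = (m*n : ℕ) * ((m*n - 1).factorial : ℝ) := by
      exact_mod_cast (Nat.mul_factorial_pred (by omega)).symm
    rw [Ck, hBm, hnf, hMf]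
    have hB : ((n-1).factorial : ℝ) ≠ 0 := by positivity
    have hC : (((m-1)*n - 1).factorial : ℝ) ≠ 0 := by positivity
    have hA : ((m*n - 1).factorial : ℝ) ≠ 0 := by positivity
    have hm0 : (m : ℝ) ≠ 0 := by positivity
    have hn0 : (n : ℝ) ≠ 0 := by positivity
    have hBk : ((n-1).factorial : ℝ)^(m-1) ≠ 0 := by positivity
    simp only [hR]
    push_cast
    field_simp
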